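/- A symmetric probability measure σ on a locally compact group L satisfies σ * σ = σ (convolution) if and only if σ is the normalized Haar measure of a compact subgroup K of L. -/

import Mathlib

open MeasureTheory Topology Filter Set
open scoped ENNReal Pointwise

set_option linter.unusedSectionVars false
set_option maxHeartbeats 1000000

section Aux

variable {L : Type*} [Group L] [TopologicalSpace L] [IsTopologicalGroup L]
    [LocallyCompactSpace L] [SecondCountableTopology L] [T2Space L]
    [MeasurableSpace L] [BorelSpace L]


/-- The support of a measure: points all of whose neighborhoods have positive measure. -/
def KIposSet (σ : Measure L) : Set L := {x | ∀ U : Set L, IsOpen U → x ∈ U → 0 < σ U}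

lemma KIcompl_eq (σ : Measure L) :
    (KIposSet σ)ᶜ = ⋃₀ {U : Set L | IsOpen U ∧ σ U = 0} := by
  ext x
  simp only [KIposSet, mem_compl_iff, mem_setOf_eq, not_forall, mem_sUnion]
  constructor
  · rintro ⟨U, hU, hxU, hpos⟩
    exact ⟨U, ⟨hU, by simpa using (not_lt.1 hpos)⟩, hxU⟩
  · rintro ⟨U, ⟨hU, hU0⟩, hxU⟩
    exact ⟨U, hU, hxU, by simp [hU0]⟩

lemma KIisClosed_posSet (σ : Measure L) : IsClosed (KIposSet σ) := by
  rw [← isOpen_compl_iff, KIcompl_eq]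
  exact isOpen_sUnion fun U hU => hU.1

lemma KIcompl_null (σ : Measure L) : σ (KIposSet σ)ᶜ = 0 := by
  rw [KIcompl_eq]
  obtain ⟨B, hBc, -, hB⟩ := TopologicalSpace.exists_countable_basis L
  have hsub : ⋃₀ {U : Set L | IsOpen U ∧ σ U = 0} ⊆ ⋃₀ {b ∈ B | σ b = 0} := by
    rintro x ⟨U, ⟨hU, hU0⟩, hxU⟩
    obtain ⟨b, hbB, hxb, hbU⟩ := hB.exists_subset_of_mem_open hxU hU
    exact ⟨b, ⟨hbB, le_antisymm (hU0 ▸ measure_mono hbU) zero_le⟩, hxb⟩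
  refine measure_mono_null hsub ?_
  exact (measure_sUnion_null_iff (hBc.mono (sep_subset _ _))).2 fun t ht => ht.2

lemma KIposSet_subset {σ : Measure L} {A : Set L} (hA : IsClosed A) (h : σ Aᶜ = 0) :
    KIposSet σ ⊆ A := by
  intro x hx
  by_contra hxA
  exact absurd (hx Aᶜ hA.isOpen_compl hxA) (by simp [h])

lemma KImconv_apply (μ ν : Measure L) [SFinite μ] [SFinite ν] {s : Set L}
    (hs : MeasurableSet s) :
    (μ.mconv ν) s = ∫⁻ x, ν ((fun y => x * y) ⁻¹' s) ∂μ := by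
  rw [Measure.mconv, Measure.map_apply measurable_mul hs,
    Measure.prod_apply (measurable_mul hs)]
  rfl



/-- Tightness: a probability measure on a σ-compact space almost lives on a compact set. -/
lemma KItight (σ : Measure L) [IsProbabilityMeasure σ] {t : ℝ≥0∞} (ht : 0 < t) :
    ∃ C : Set L, IsCompact C ∧ σ Cᶜ < t := by
  have hmono : Antitone (fun n => (compactCovering L n)ᶜ) :=
    fun m n h => compl_subset_compl.2 (compactCovering_subset L h)
  have hms : ∀ n, NullMeasurableSet (compactCovering L n)ᶜ σ := fun n =>
    (((isCompact_compactCovering L n).isClosed.measurableSet).compl).nullMeasurableSet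
  have hiInter : (⋂ n, (compactCovering L n)ᶜ) = ∅ := by
    rw [← compl_iUnion, iUnion_compactCovering, compl_univ]
  have := tendsto_measure_iInter_atTop (μ := σ) hms hmono
    ⟨0, measure_ne_top σ _⟩
  rw [hiInter, measure_empty] at this
  have := this.eventually (eventually_lt_nhds ht)
  obtain ⟨n, hn⟩ := this.exists
  exact ⟨compactCovering L n, isCompact_compactCovering L n, hn⟩

/-- Two probability measures agreeing on lintegrals of compactly supported `[0,1]`-valued
continuous functions are equal. -/
lemma KIext {μ ν : Measure L} [IsProbabilityMeasure μ] [IsProbabilityMeasure ν]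
    (h : ∀ f : C(L, ℝ), HasCompactSupport f → (∀ x, f x ∈ Icc (0:ℝ) 1) →
      ∫⁻ x, ENNReal.ofReal (f x) ∂μ = ∫⁻ x, ENNReal.ofReal (f x) ∂ν) : μ = ν := by
  -- first, agreement on compact sets
  have key : ∀ ρ₁ ρ₂ : Measure L, IsProbabilityMeasure ρ₁ → IsProbabilityMeasure ρ₂ →
      (∀ f : C(L, ℝ), HasCompactSupport f → (∀ x, f x ∈ Icc (0:ℝ) 1) →
        ∫⁻ x, ENNReal.ofReal (f x) ∂ρ₁ = ∫⁻ x, ENNReal.ofReal (f x) ∂ρ₂) →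
      ∀ Q : Set L, IsCompact Q → ρ₁ Q ≤ ρ₂ Q := by
    intro ρ₁ ρ₂ h₁ h₂ hagree Q hQ
    rw [Set.measure_eq_iInf_isOpen Q ρ₂]
    refine le_iInf fun U => le_iInf fun hQU => le_iInf fun hU => ?_
    obtain ⟨f, hf1, hf0, hfc, hficc⟩ :=
      exists_continuous_one_zero_of_isCompact hQ hU.isClosed_compl
        (disjoint_compl_right_iff_subset.mpr hQU)
    calc ρ₁ Q = ∫⁻ x, Q.indicator 1 x ∂ρ₁ := by
              rw [lintegral_indicator_one hQ.isClosed.measurableSet]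
      _ ≤ ∫⁻ x, ENNReal.ofReal (f x) ∂ρ₁ := by
              refine lintegral_mono fun x => ?_
              by_cases hx : x ∈ Q
              · simp [indicator_of_mem hx, hf1 hx]
              · simp [indicator_of_notMem hx]
      _ = ∫⁻ x, ENNReal.ofReal (f x) ∂ρ₂ := hagree f hfc hficc
      _ ≤ ∫⁻ x, U.indicator 1 x ∂ρ₂ := by
              refine lintegral_mono fun x => ?_
              by_cases hx : x ∈ U
              · simpa [indicator_of_mem hx] using ENNReal.ofReal_le_one.2 (hficc x).2
              · simp [indicator_of_notMem hx, hf0 hx]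
      _ = ρ₂ U := lintegral_indicator_one hU.measurableSet
  have hcompact : ∀ Q : Set L, IsCompact Q → μ Q = ν Q := fun Q hQ =>
    le_antisymm (key μ ν inferInstance inferInstance h Q hQ)
      (key ν μ inferInstance inferInstance (fun f hc hicc => (h f hc hicc).symm) Q hQ)
  ext s hs
  rw [hs.measure_eq_iSup_isCompact, hs.measure_eq_iSup_isCompact]
  congr 1
  ext K
  congr 1
  ext hK
  congr 1
  ext hKs
  exact hcompact K hKs



/-- Continuity of the convolution-type function `x ↦ ∫⁻ f (x * y) dσ(y)` for `f` bounded. -/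
lemma KIcontF (σ : Measure L) [IsProbabilityMeasure σ] {f : L → ℝ} (hf : Continuous f)
    {M : ℝ} (hM : ∀ x, f x ≤ M) :
    Continuous (fun x => ∫⁻ y, ENNReal.ofReal (f (x * y)) ∂σ) := by
  rw [continuous_iff_seqContinuous]
  intro u x hu
  have : Tendsto (fun n => ∫⁻ y, ENNReal.ofReal (f (u n * y)) ∂σ) atTop
      (𝓝 (∫⁻ y, ENNReal.ofReal (f (x * y)) ∂σ)) := by
    refine tendsto_lintegral_of_dominated_convergence (fun _ => ENNReal.ofReal M)
      (fun n => ?_) (fun n => ae_of_all _ fun y => ?_) (by simp) (ae_of_all _ fun y => ?_)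
    · exact (ENNReal.continuous_ofReal.comp (hf.comp (continuous_mul_left (u n)))).measurable
    · exact ENNReal.ofReal_le_ofReal (hM _)
    · exact (ENNReal.continuous_ofReal.tendsto _).comp
        ((hf.tendsto _).comp (by exact (hu.mul_const y)))
  exact this



lemma KIharmonic (σ : Measure L) [IsProbabilityMeasure σ] (hconv : σ.mconv σ = σ)
    {f : L → ℝ} (hf : Continuous f) (x : L) :
    ∫⁻ y, (∫⁻ z, ENNReal.ofReal (f (x * y * z)) ∂σ) ∂σ
      = ∫⁻ y, ENNReal.ofReal (f (x * y)) ∂σ := by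
  have hmeas : Measurable fun w => ENNReal.ofReal (f (x * w)) :=
    (ENNReal.continuous_ofReal.comp (hf.comp (continuous_mul_left x))).measurable
  conv_rhs => rw [← hconv]
  rw [Measure.mconv, lintegral_map hmeas measurable_mul,
    lintegral_prod _ (by exact (hmeas.comp measurable_mul).aemeasurable)]
  simp [mul_assoc]





lemma KImul_mem {σ : Measure L} [IsProbabilityMeasure σ] (hconv : σ.mconv σ = σ)
    {x y : L} (hx : x ∈ KIposSet σ) (hy : y ∈ KIposSet σ) : x * y ∈ KIposSet σ := by
  intro W hW hxyW
  have hWn : (fun p : L × L => p.1 * p.2) ⁻¹' W ∈ 𝓝 (x, y) :=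
    (continuous_mul.tendsto (x, y)) (hW.mem_nhds hxyW)
  rw [mem_nhds_prod_iff] at hWn
  obtain ⟨u, hu, v, hv, huv⟩ := hWn
  obtain ⟨U, hUu, hUo, hxU⟩ := mem_nhds_iff.1 hu
  obtain ⟨V, hVv, hVo, hyV⟩ := mem_nhds_iff.1 hv
  have key : σ W ≥ σ V * σ U := by
    calc σ W = (σ.mconv σ) W := by rw [hconv]
      _ = ∫⁻ g, σ ((fun z => g * z) ⁻¹' W) ∂σ := KImconv_apply σ σ hW.measurableSet
      _ ≥ ∫⁻ g, U.indicator (fun _ => σ V) g ∂σ := by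
          refine lintegral_mono fun g => ?_
          by_cases hg : g ∈ U
          · rw [indicator_of_mem hg]
            refine measure_mono fun z hz => ?_
            exact huv (Set.mk_mem_prod (hUu hg) (hVv hz))
          · simp [indicator_of_notMem hg]
      _ = σ V * σ U := lintegral_indicator_const hUo.measurableSet _
  exact lt_of_lt_of_le (ENNReal.mul_pos (hy V hVo hyV).ne' (hx U hUo hxU).ne') key

lemma KIinv_mem {σ : Measure L} [IsProbabilityMeasure σ]
    (hsymm : σ.map (fun g => g⁻¹) = σ) {x : L} (hx : x ∈ KIposSet σ) :
    x⁻¹ ∈ KIposSet σ := by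
  intro U hU hxU
  have : σ U = σ ((fun g : L => g⁻¹) ⁻¹' U) := by
    conv_lhs => rw [← hsymm]
    exact Measure.map_apply measurable_inv hU.measurableSet
  rw [this]
  exact hx _ (hU.preimage continuous_inv) (by simpa using hxU)



lemma KIone_mem {σ : Measure L} [IsProbabilityMeasure σ]
    (hsymm : σ.map (fun g => g⁻¹) = σ) (hconv : σ.mconv σ = σ) :
    (1 : L) ∈ KIposSet σ := by
  have hfull : σ (KIposSet σ) ≠ 0 := by
    have h1 : σ (KIposSet σ) = 1 := by
      have := measure_add_measure_compl (μ := σ)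
        (KIisClosed_posSet σ).measurableSet
      rw [KIcompl_null σ, add_zero] at this
      simpa using this
    simp [h1]
  obtain ⟨x, hx⟩ := nonempty_of_measure_ne_zero hfull
  simpa using KImul_mem hconv hx (KIinv_mem hsymm hx)

lemma KIfull (σ : Measure L) [IsProbabilityMeasure σ] : σ (KIposSet σ) = 1 := by
  have := measure_add_measure_compl (μ := σ) (KIisClosed_posSet σ).measurableSet
  rw [KIcompl_null σ, add_zero] at this
  simpa using this

lemma KIkeyPos {σ : Measure L} [IsProbabilityMeasure σ]
    (hsymm : σ.map (fun g => g⁻¹) = σ) (hconv : σ.mconv σ = σ)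
    {f : L → ℝ} (hfc : Continuous f) (hfs : HasCompactSupport f) (hf0 : 0 ≤ f)
    (hpos : 0 < ∫⁻ y, ENNReal.ofReal (f y) ∂σ)
    {k : L} (hk : k ∈ KIposSet σ) :
    ∫⁻ y, ENNReal.ofReal (f (k * y)) ∂σ = ∫⁻ y, ENNReal.ofReal (f y) ∂σ := by
  set S : Set L := KIposSet σ with hSdef
  set F : L → ℝ≥0∞ := fun x => ∫⁻ y, ENNReal.ofReal (f (x * y)) ∂σ with hFdef
  have hF1 : F 1 = ∫⁻ y, ENNReal.ofReal (f y) ∂σ := by simp [hFdef]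
  obtain ⟨M₀, hM₀⟩ := hfc.bounded_above_of_compact_support hfs
  set M : ℝ := max M₀ 1 with hMdef
  have hM : ∀ x, f x ≤ M := fun x =>
    ((le_abs_self (f x)).trans (by simpa using hM₀ x)).trans (le_max_left _ _)
  have hM1 : (1 : ℝ≥0∞) ≤ ENNReal.ofReal M := by
    rw [show (1:ℝ≥0∞) = ENNReal.ofReal 1 by simp]
    exact ENNReal.ofReal_le_ofReal (le_max_right _ _)
  have hMne : ENNReal.ofReal M ≠ 0 := fun h => by simp [h] at hM1
  have hFcont : Continuous F := KIcontF σ hfc hM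
  have hFharm : ∀ x, ∫⁻ y, F (x * y) ∂σ = F x := fun x => KIharmonic σ hconv hfc x
  -- uniform bound on F, and decay outside `tsupport f * C⁻¹`
  have hFle : ∀ x, F x ≤ ENNReal.ofReal M * σ ((fun y => x * y) ⁻¹' tsupport f) := by
    intro x
    calc F x ≤ ∫⁻ y, ((fun y => x * y) ⁻¹' tsupport f).indicator
          (fun _ => ENNReal.ofReal M) y ∂σ := by
          refine lintegral_mono fun y => ?_
          by_cases hy : y ∈ (fun y => x * y) ⁻¹' tsupport f
          · rw [indicator_of_mem hy]
            exact ENNReal.ofReal_le_ofReal (hM _)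
          · rw [indicator_of_notMem hy, image_eq_zero_of_notMem_tsupport hy]
            simp
      _ = ENNReal.ofReal M * σ ((fun y => x * y) ⁻¹' tsupport f) :=
          lintegral_indicator_const
            ((hfs.isClosed.preimage (continuous_mul_left x)).measurableSet) _
  have hFleM : ∀ x, F x ≤ ENNReal.ofReal M := fun x =>
    (hFle x).trans (by
      calc ENNReal.ofReal M * σ ((fun y => x * y) ⁻¹' tsupport f)
          ≤ ENNReal.ofReal M * 1 := by gcongr; exact prob_le_one
        _ = ENNReal.ofReal M := mul_one _)
  have hFne : ∀ x, F x ≠ ⊤ := fun x => ((hFleM x).trans_lt ENNReal.ofReal_lt_top).ne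
  -- choose a compact set C with small complement
  obtain ⟨C, hC, hCc⟩ := KItight σ (t := F 1 / ENNReal.ofReal M)
    (ENNReal.div_pos (hF1 ▸ hpos.ne') ENNReal.ofReal_ne_top)
  have hB : ENNReal.ofReal M * σ Cᶜ < F 1 := by
    rw [mul_comm]
    exact (ENNReal.lt_div_iff_mul_lt (Or.inl hMne)
      (Or.inl ENNReal.ofReal_ne_top)).1 hCc
  have hdecay : ∀ x, x ∉ tsupport f * C⁻¹ → F x ≤ ENNReal.ofReal M * σ Cᶜ := by
    intro x hx
    refine (hFle x).trans ?_
    gcongr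
    intro y hy
    by_contra hyC
    simp only [mem_compl_iff, not_not] at hyC
    exact hx ⟨x * y, hy, y⁻¹, Set.inv_mem_inv.2 hyC, by group⟩
  -- the compact set where the maximum is attained
  set D : Set L := S ∩ (tsupport f * C⁻¹) with hDdef
  have hDc : IsCompact D := (hfs.mul hC.inv).inter_left (KIisClosed_posSet σ)
  have h1S : (1 : L) ∈ S := KIone_mem hsymm hconv
  have h1D : (1 : L) ∈ D := by
    refine ⟨h1S, ?_⟩
    by_contra h
    exact absurd ((hdecay 1 h).trans_lt hB) (lt_irrefl _)
  obtain ⟨x₀, hx₀D, hx₀max⟩ := hDc.exists_isMaxOn ⟨1, h1D⟩ hFcont.continuousOn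
  have hmax : ∀ x ∈ S, F x ≤ F x₀ := by
    intro x hxS
    by_cases hx : x ∈ tsupport f * C⁻¹
    · exact hx₀max ⟨hxS, hx⟩
    · exact ((hdecay x hx).trans hB.le).trans (hx₀max h1D)
  have hx₀S : x₀ ∈ S := hx₀D.1
  -- a.e. equality F (x₀ * y) = F x₀, then everywhere on S
  have haeS : ∀ᵐ y ∂σ, y ∈ S := by
    rw [ae_iff]
    exact KIcompl_null σ
  have hle : ∀ᵐ y ∂σ, F (x₀ * y) ≤ F x₀ := by
    filter_upwards [haeS] with y hy
    exact hmax _ (KImul_mem hconv hx₀S hy)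
  have hgmeas : Measurable fun y => F (x₀ * y) :=
    (hFcont.comp (continuous_mul_left x₀)).measurable
  have hsub : ∫⁻ y, (F x₀ - F (x₀ * y)) ∂σ = 0 := by
    rw [lintegral_sub hgmeas (by rw [hFharm x₀]; exact hFne x₀) hle, hFharm x₀,
      lintegral_const]
    simp [tsub_self]
  have haeeq : ∀ᵐ y ∂σ, F (x₀ * y) = F x₀ := by
    have h0 := (lintegral_eq_zero_iff (measurable_const.sub hgmeas)).1 hsub
    filter_upwards [h0, hle] with y hy₁ hy₂
    exact le_antisymm hy₂ (tsub_eq_zero_iff_le.1 hy₁)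
  have hScl : S ⊆ {y | F (x₀ * y) = F x₀} := by
    refine KIposSet_subset (isClosed_eq (hFcont.comp (continuous_mul_left x₀))
      continuous_const) ?_
    rw [compl_setOf]
    exact ae_iff.1 haeeq
  -- conclude
  have hall : ∀ x ∈ S, F x = F x₀ := by
    intro x hxS
    have h1 : x₀⁻¹ * x ∈ S := KImul_mem hconv (KIinv_mem hsymm hx₀S) hxS
    have := hScl h1
    simpa [mul_inv_cancel_left] using this
  rw [← hF1]
  show F k = F 1
  rw [hall k hk, hall 1 h1S]

lemma KIkey {σ : Measure L} [IsProbabilityMeasure σ]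
    (hsymm : σ.map (fun g => g⁻¹) = σ) (hconv : σ.mconv σ = σ)
    {f : L → ℝ} (hfc : Continuous f) (hfs : HasCompactSupport f) (hf0 : 0 ≤ f)
    {k : L} (hk : k ∈ KIposSet σ) :
    ∫⁻ y, ENNReal.ofReal (f (k * y)) ∂σ = ∫⁻ y, ENNReal.ofReal (f y) ∂σ := by
  by_cases hpos : 0 < ∫⁻ y, ENNReal.ofReal (f y) ∂σ
  · exact KIkeyPos hsymm hconv hfc hfs hf0 hpos hk
  push_neg at hpos
  replace hpos : ∫⁻ y, ENNReal.ofReal (f y) ∂σ = 0 := le_antisymm hpos zero_le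
  obtain ⟨C, hC, hCc⟩ := KItight σ (t := 1/2) (by norm_num)
  have hCm : MeasurableSet C := hC.isClosed.measurableSet
  have hCpos : 0 < σ C := by
    rcases eq_or_lt_of_le (zero_le (a := σ C)) with h | h
    · exfalso
      have h2 := measure_add_measure_compl (μ := σ) hCm
      rw [← h, zero_add, measure_univ] at h2
      rw [h2] at hCc
      norm_num at hCc
    · exact h
  obtain ⟨g, hg1, hg0, hgc, hgicc⟩ :=
    exists_continuous_one_zero_of_isCompact hC isClosed_empty (disjoint_empty C)
  have hgmb : Measurable fun y => ENNReal.ofReal (g y) :=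
    (ENNReal.continuous_ofReal.comp g.continuous).measurable
  have hfmb : Measurable fun y => ENNReal.ofReal (f y) :=
    (ENNReal.continuous_ofReal.comp hfc).measurable
  have hIg : 0 < ∫⁻ y, ENNReal.ofReal (g y) ∂σ := by
    refine lt_of_lt_of_le hCpos ?_
    calc σ C = ∫⁻ y, C.indicator 1 y ∂σ := (lintegral_indicator_one hCm).symm
      _ ≤ ∫⁻ y, ENNReal.ofReal (g y) ∂σ := by
          refine lintegral_mono fun y => ?_
          by_cases hy : y ∈ C
          · simp [indicator_of_mem hy, hg1 hy]
          · simp [indicator_of_notMem hy]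
  have hIgne : ∫⁻ y, ENNReal.ofReal (g y) ∂σ ≠ ⊤ := by
    refine ne_of_lt (lt_of_le_of_lt ?_ (by norm_num : (1:ℝ≥0∞) < ⊤))
    calc ∫⁻ y, ENNReal.ofReal (g y) ∂σ ≤ ∫⁻ _, 1 ∂σ := by
          exact lintegral_mono fun y => ENNReal.ofReal_le_one.2 (hgicc y).2
      _ = 1 := by simp
  -- apply the positive case to f + g
  have hsum : ∀ x : L, ENNReal.ofReal (f x + g x)
      = ENNReal.ofReal (f x) + ENNReal.ofReal (g x) := fun x =>
    ENNReal.ofReal_add (hf0 x) (hgicc x).1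
  have hhpos : 0 < ∫⁻ y, ENNReal.ofReal (f y + g y) ∂σ := by
    simp only [hsum]
    rw [lintegral_add_left hfmb]
    rw [hpos, zero_add]
    exact hIg
  have Eh := KIkeyPos hsymm hconv (hfc.add g.continuous) (hfs.add hgc)
    (fun x => add_nonneg (hf0 x) (hgicc x).1) hhpos hk
  have Eg := KIkeyPos hsymm hconv g.continuous hgc
    (fun x => (hgicc x).1) hIg hk
  simp only [Pi.add_apply, hsum] at Eh
  have hfmbk : Measurable fun y : L => ENNReal.ofReal (f (k * y)) := by fun_prop
  rw [lintegral_add_left hfmbk, lintegral_add_left hfmb] at Eh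
  rw [hpos, zero_add, Eg] at Eh
  have : ∫⁻ y, ENNReal.ofReal (f (k * y)) ∂σ = 0 := by
    have h2 : (∫⁻ y, ENNReal.ofReal (g y) ∂σ)
        + ∫⁻ y, ENNReal.ofReal (f (k * y)) ∂σ
        = (∫⁻ y, ENNReal.ofReal (g y) ∂σ) + 0 := by
      rw [add_zero, add_comm]
      exact Eh
    exact (ENNReal.add_right_inj hIgne).1 h2
  rw [this, hpos]

lemma KIinvariant (σ : Measure L) [IsProbabilityMeasure σ]
    (hsymm : σ.map (fun g => g⁻¹) = σ) (hconv : σ.mconv σ = σ)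
    {k : L} (hk : k ∈ KIposSet σ) :
    σ.map (fun x => k * x) = σ := by
  have : IsProbabilityMeasure (σ.map (fun x => k * x)) :=
    Measure.isProbabilityMeasure_map (measurable_const_mul k).aemeasurable
  refine KIext fun f hfcs hficc => ?_
  rw [lintegral_map f.continuous.measurable.ennreal_ofReal (measurable_const_mul k)]
  exact KIkey hsymm hconv f.continuous hfcs (fun x => (hficc x).1) hk

lemma KIcompact (σ : Measure L) [IsProbabilityMeasure σ]
    (hsymm : σ.map (fun g => g⁻¹) = σ) (hconv : σ.mconv σ = σ) :
    IsCompact (KIposSet σ) := by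
  obtain ⟨C, hC, hCc⟩ := KItight σ (t := 1/2) (by norm_num)
  have hCm : MeasurableSet C := hC.isClosed.measurableSet
  have hCpos : 1/2 < σ C := by
    have h2 := measure_add_measure_compl (μ := σ) hCm
    rw [measure_univ] at h2
    by_contra h
    push_neg at h
    have hlt : σ C + σ Cᶜ < 1/2 + 1/2 :=
      ENNReal.add_lt_add_of_le_of_lt (measure_ne_top σ C) h hCc
    rw [h2, ENNReal.add_halves] at hlt
    exact lt_irrefl _ hlt
  refine (hC.mul hC.inv).of_isClosed_subset (KIisClosed_posSet σ) ?_
  intro k hk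
  have hinv := KIinvariant σ hsymm hconv hk
  set A : Set L := (fun x => k * x) '' C with hAdef
  have hAc : IsCompact A := hC.image (continuous_mul_left k)
  have hAm : MeasurableSet A := hAc.isClosed.measurableSet
  have hApre : (fun x => k * x) ⁻¹' A = C := by
    ext x
    simp [hAdef, Set.mem_image, eq_comm]
  have hAmeas : σ A = σ C := by
    conv_lhs => rw [← hinv]
    rw [Measure.map_apply (measurable_const_mul k) hAm, hApre]
  have hnd : ¬Disjoint A C := by
    intro hd
    have := measure_union (μ := σ) hd hCm
    have hle : σ (A ∪ C) ≤ 1 := prob_le_one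
    rw [this, hAmeas] at hle
    have h1 : (1:ℝ≥0∞) < σ C + σ C := by
      calc (1:ℝ≥0∞) = 1/2 + 1/2 := (ENNReal.add_halves 1).symm
        _ < σ C + σ C :=
            ENNReal.add_lt_add_of_le_of_lt (by simp) hCpos.le hCpos
    exact absurd (h1.trans_le hle) (lt_irrefl _)
  obtain ⟨x, hxA, hxC⟩ := Set.not_disjoint_iff.1 hnd
  obtain ⟨c, hcC, hcx⟩ := hxA
  exact ⟨x, hxC, c⁻¹, Set.inv_mem_inv.2 hcC, by rw [← hcx]; group⟩

end Aux

/-- A symmetric probability measure `σ` on a locally compact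
(second countable Hausdorff) group `L` satisfies `σ ∗ σ = σ` (convolution) if and only if
`σ` is the normalized Haar measure of a compact subgroup `K ≤ L`, i.e. `σ` is a probability
measure giving full mass to `K` and invariant under left translation by elements of `K`. -/
theorem symmetric_idempotent_conv_iff_haar_of_compact_subgroup
    {L : Type*} [Group L] [TopologicalSpace L] [IsTopologicalGroup L]
    [LocallyCompactSpace L] [SecondCountableTopology L] [T2Space L]
    [MeasurableSpace L] [BorelSpace L]
    (σ : Measure L) [IsProbabilityMeasure σ]
    (hsymm : σ.map (fun g => g⁻¹) = σ) :
    σ.mconv σ = σ ↔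
      ∃ K : Subgroup L, IsCompact (K : Set L) ∧ σ (K : Set L) = 1 ∧
        ∀ k ∈ K, σ.map (fun x => k * x) = σ := by
  constructor
  · intro hconv
    refine ⟨{ carrier := KIposSet σ
              mul_mem' := fun hx hy => KImul_mem hconv hx hy
              one_mem' := KIone_mem hsymm hconv
              inv_mem' := fun hx => KIinv_mem hsymm hx },
      KIcompact σ hsymm hconv, KIfull σ, fun k hk => KIinvariant σ hsymm hconv hk⟩
  · rintro ⟨K, hKc, hK1, hinv⟩
    have hKm : MeasurableSet (K : Set L) := hKc.isClosed.measurableSet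
    have hKcompl : σ ((K : Set L))ᶜ = 0 := by
      rw [measure_compl hKm (measure_ne_top σ _), hK1, measure_univ, tsub_self]
    ext s hs
    rw [KImconv_apply σ σ hs]
    have hae : ∀ᵐ x ∂σ, σ ((fun y => x * y) ⁻¹' s) = σ s := by
      have hmem : ∀ᵐ x ∂σ, x ∈ (K : Set L) := by
        rw [ae_iff]
        exact hKcompl
      filter_upwards [hmem] with x hx
      rw [← Measure.map_apply (measurable_const_mul x) hs, hinv x hx]
    rw [lintegral_congr_ae hae, lintegral_const, measure_univ, mul_one]
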